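/- For integer K ≥ 2, let Z_K have the density f_K(z) = K·e^{−z}·(1 − e^{−z})^{K−1} on (0,∞) (the maximum of K i.i.d. unit-mean exponential random variables). Then (log K)·E[Z_K⁻¹] → 1 as K → ∞, where E[Z_K⁻¹] = ∫₀^∞ z⁻¹·K·e^{−z}·(1 − e^{−z})^{K−1} dz (which is finite for K ≥ 2). -/

import Mathlib

open MeasureTheory Filter Topology

section AuxMaxExpInv
open Set

namespace MaxExpInvAux

noncomputable def h (K : ℕ) (z : ℝ) : ℝ :=
  (K : ℝ) * Real.exp (-z) * (1 - Real.exp (-z)) ^ (K - 1)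

lemma base_nonneg {z : ℝ} (hz : 0 ≤ z) : 0 ≤ 1 - Real.exp (-z) := by
  have : Real.exp (-z) ≤ 1 := Real.exp_le_one_iff.mpr (by linarith)
  linarith

lemma base_le_one (z : ℝ) : 1 - Real.exp (-z) ≤ 1 := by
  have := (Real.exp_pos (-z)).le; linarith

lemma base_le_self (z : ℝ) : 1 - Real.exp (-z) ≤ z := by
  have := Real.add_one_le_exp (-z); linarith

lemma h_nonneg {K : ℕ} {z : ℝ} (hz : 0 ≤ z) : 0 ≤ h K z := by
  have h1 := base_nonneg hz
  unfold h; positivity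

lemma h_continuous (K : ℕ) : Continuous (h K) := by
  unfold h; fun_prop

lemma hasDerivAt_F (K : ℕ) (z : ℝ) :
    HasDerivAt (fun z => (1 - Real.exp (-z)) ^ K) (h K z) z := by
  have hg : HasDerivAt (fun z : ℝ => 1 - Real.exp (-z)) (Real.exp (-z)) z := by
    have h1 : HasDerivAt (fun z : ℝ => Real.exp (-z)) (Real.exp (-z) * (-1)) z :=
      (Real.hasDerivAt_exp (-z)).comp z (hasDerivAt_neg z)
    simpa using h1.const_sub 1
  have := hg.fun_pow K
  simpa [h, mul_comm, mul_left_comm, mul_assoc] using this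

lemma h_integrableOn {K : ℕ} {a : ℝ} (ha : 0 ≤ a) : IntegrableOn (h K) (Ioi a) := by
  have hint : IntegrableOn (fun z : ℝ => (K : ℝ) * Real.exp (-z)) (Ioi a) := by
    have := (exp_neg_integrableOn_Ioi a (one_pos)).const_mul (K : ℝ)
    simpa [IntegrableOn] using this
  refine Integrable.mono hint ((h_continuous K).aestronglyMeasurable.restrict) ?_
  filter_upwards [ae_restrict_mem measurableSet_Ioi] with z hz
  have hz0 : (0:ℝ) ≤ z := le_trans ha (le_of_lt hz)
  have h0 := base_nonneg hz0
  have h1 := base_le_one z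
  rw [Real.norm_eq_abs, Real.norm_eq_abs, abs_of_nonneg (h_nonneg hz0),
    abs_of_nonneg (by positivity : (0:ℝ) ≤ (K:ℝ) * Real.exp (-z))]
  have : (1 - Real.exp (-z)) ^ (K-1) ≤ 1 := pow_le_one₀ h0 h1
  calc h K z ≤ (K : ℝ) * Real.exp (-z) * 1 := by
        unfold h; apply mul_le_mul_of_nonneg_left this (by positivity)
    _ = (K : ℝ) * Real.exp (-z) := mul_one _

lemma integral_h_Ioi {K : ℕ} (hK : 1 ≤ K) {a : ℝ} (ha : 0 ≤ a) :
    ∫ z in Ioi a, h K z = 1 - (1 - Real.exp (-a)) ^ K := by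
  have := integral_Ioi_of_hasDerivAt_of_tendsto' (f := fun z => (1 - Real.exp (-z)) ^ K)
    (f' := h K) (a := a) (m := 1) (fun x _ => hasDerivAt_F K x) (h_integrableOn ha) ?_
  · exact this
  · have h1 : Tendsto (fun z : ℝ => 1 - Real.exp (-z)) atTop (𝓝 1) := by
      have : Tendsto (fun z : ℝ => Real.exp (-z)) atTop (𝓝 0) := by
        simpa using Real.tendsto_exp_comp_nhds_zero.mpr tendsto_neg_atTop_atBot
      simpa using (tendsto_const_nhds (x := (1:ℝ))).sub this
    simpa using h1.pow K

lemma integral_h_Ioc {K : ℕ} {p q : ℝ} (hpq : p ≤ q) :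
    ∫ z in Ioc p q, h K z = (1 - Real.exp (-q)) ^ K - (1 - Real.exp (-p)) ^ K := by
  rw [← intervalIntegral.integral_of_le hpq]
  exact intervalIntegral.integral_eq_sub_of_hasDerivAt (fun x _ => hasDerivAt_F K x)
    ((h_continuous K).intervalIntegrable p q)


lemma f_integrableOn {K : ℕ} (hK : 2 ≤ K) :
    IntegrableOn (fun z => z⁻¹ * h K z) (Ioi (0:ℝ)) := by
  have hint : IntegrableOn (fun z : ℝ => (K : ℝ) * Real.exp 1 * Real.exp (-z)) (Ioi 0) := by
    have := (exp_neg_integrableOn_Ioi 0 (one_pos)).const_mul ((K : ℝ) * Real.exp 1)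
    simpa [mul_assoc, IntegrableOn] using this
  refine Integrable.mono hint
    ((measurable_inv.mul (h_continuous K).measurable).aestronglyMeasurable.restrict) ?_
  filter_upwards [ae_restrict_mem measurableSet_Ioi] with z hz
  have hz0 : (0:ℝ) < z := hz
  have h0 := base_nonneg hz0.le
  have h1 := base_le_one z
  have hfnn : 0 ≤ z⁻¹ * h K z := mul_nonneg (inv_nonneg.2 hz0.le) (h_nonneg hz0.le)
  rw [Real.norm_eq_abs, Real.norm_eq_abs, abs_of_nonneg hfnn,
    abs_of_nonneg (by positivity : (0:ℝ) ≤ (K:ℝ) * Real.exp 1 * Real.exp (-z))]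
  rcases le_or_gt z 1 with hz1 | hz1
  · have hp : (1 - Real.exp (-z)) ^ (K-1) ≤ z ^ (K-1) :=
      pow_le_pow_left₀ h0 (base_le_self z) _
    have step : z⁻¹ * h K z ≤ (K:ℝ) * Real.exp (-z) * z ^ (K-2) := by
      have h2 : z⁻¹ * h K z ≤ z⁻¹ * ((K:ℝ) * Real.exp (-z) * z ^ (K-1)) := by
        apply mul_le_mul_of_nonneg_left _ (inv_nonneg.2 hz0.le)
        exact mul_le_mul_of_nonneg_left hp (by positivity)
      have h3 : z⁻¹ * ((K:ℝ) * Real.exp (-z) * z ^ (K-1))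
          = (K:ℝ) * Real.exp (-z) * z ^ (K-2) := by
        rw [show K - 1 = (K-2)+1 from by omega, pow_succ]
        field_simp
      linarith [h2, h3.le]
    have hle1 : z ^ (K-2) ≤ 1 := pow_le_one₀ hz0.le hz1
    have : (K:ℝ) * Real.exp (-z) * z ^ (K-2) ≤ (K:ℝ) * Real.exp (-z) * 1 :=
      mul_le_mul_of_nonneg_left hle1 (by positivity)
    have he : (1:ℝ) ≤ Real.exp 1 := by
      have := Real.add_one_le_exp (1:ℝ); linarith
    nlinarith [Real.exp_pos (-z), (show (0:ℝ) ≤ (K:ℝ) by positivity)]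
  · have hzinv : z⁻¹ ≤ 1 := by
      rw [inv_le_one_iff₀]; right; exact hz1.le
    have hp1 : (1 - Real.exp (-z)) ^ (K-1) ≤ 1 := pow_le_one₀ h0 h1
    have hh : h K z ≤ (K:ℝ) * Real.exp (-z) := by
      unfold h
      calc (K : ℝ) * Real.exp (-z) * (1 - Real.exp (-z)) ^ (K - 1)
          ≤ (K : ℝ) * Real.exp (-z) * 1 := mul_le_mul_of_nonneg_left hp1 (by positivity)
        _ = (K : ℝ) * Real.exp (-z) := mul_one _
    have he : (1:ℝ) ≤ Real.exp 1 := by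
      have := Real.add_one_le_exp (1:ℝ); linarith
    have hhnn : 0 ≤ h K z := h_nonneg hz0.le
    calc z⁻¹ * h K z ≤ 1 * h K z := mul_le_mul_of_nonneg_right hzinv hhnn
      _ = h K z := one_mul _
      _ ≤ (K:ℝ) * Real.exp (-z) := hh
      _ ≤ (K:ℝ) * Real.exp 1 * Real.exp (-z) := by
          nlinarith [Real.exp_pos (-z), (show (0:ℝ) ≤ (K:ℝ) by positivity)]



lemma tendsto_sub_two_log : Tendsto (fun x : ℝ => x - 2 * Real.log x) atTop atTop := by
  apply tendsto_atTop_mono' atTop ?_ (Tendsto.atTop_div_const two_pos tendsto_id)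
  filter_upwards [(Real.isLittleO_log_id_atTop.tendsto_div_nhds_zero).eventually
      (eventually_le_nhds (by norm_num : (0:ℝ) < 1/8)), eventually_ge_atTop (1:ℝ)]
    with x h1 h2
  have hx : (0:ℝ) < x := lt_of_lt_of_le one_pos h2
  simp only [id_eq] at h1
  rw [div_le_iff₀ hx] at h1
  simp only [id_eq]
  linarith

lemma tendsto_ratio_sub : Tendsto (fun x : ℝ => x / (x - 2 * Real.log x)) atTop (𝓝 1) := by
  have h1 : Tendsto (fun x : ℝ => 1 - 2 * (Real.log x / x)) atTop (𝓝 1) := by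
    have := (Real.isLittleO_log_id_atTop.tendsto_div_nhds_zero).const_mul (2:ℝ)
    simpa using tendsto_const_nhds.sub this
  have h2 := h1.inv₀ (by norm_num)
  rw [show ((1:ℝ))⁻¹ = 1 from inv_one] at h2
  apply h2.congr'
  filter_upwards [eventually_gt_atTop (0:ℝ)] with x hx
  have hx0 : x ≠ 0 := ne_of_gt hx
  have : 1 - 2 * (Real.log x / x) = (x - 2 * Real.log x) / x := by
    field_simp
  rw [this, inv_div]

lemma tendsto_ratio_add : Tendsto (fun x : ℝ => x / (x + 2 * Real.log x)) atTop (𝓝 1) := by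
  have h1 : Tendsto (fun x : ℝ => 1 + 2 * (Real.log x / x)) atTop (𝓝 1) := by
    have := (Real.isLittleO_log_id_atTop.tendsto_div_nhds_zero).const_mul (2:ℝ)
    simpa using tendsto_const_nhds.add this
  have h2 := h1.inv₀ (by norm_num)
  rw [show ((1:ℝ))⁻¹ = 1 from inv_one] at h2
  apply h2.congr'
  filter_upwards [eventually_gt_atTop (0:ℝ)] with x hx
  have hx0 : x ≠ 0 := ne_of_gt hx
  have : 1 + 2 * (Real.log x / x) = (x + 2 * Real.log x) / x := by
    field_simp
  rw [this, inv_div]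


noncomputable def aa (K : ℕ) : ℝ := Real.log K - 2 * Real.log (Real.log K)

noncomputable def Lo (K : ℕ) : ℝ :=
  (1 - ((Real.log K)^2)⁻¹ - (1 - Real.exp (-1))^K) *
    (Real.log K / (Real.log K + 2 * Real.log (Real.log K)))

noncomputable def U (K : ℕ) : ℝ :=
  Real.log K * ((1/2) * ((K:ℝ) * (1/2:ℝ)^(K-2)))
    + Real.log K * (aa K * (2 * (K:ℝ) * Real.exp (-((Real.log K)^2/2))))
    + Real.log K * (aa K)⁻¹

lemma hLT : Tendsto (fun K : ℕ => Real.log K) atTop atTop :=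
  Real.tendsto_log_atTop.comp tendsto_natCast_atTop_atTop

lemma haaT : Tendsto aa atTop atTop := tendsto_sub_two_log.comp hLT

lemma Lo_tendsto : Tendsto Lo atTop (𝓝 1) := by
  have t1 : Tendsto (fun K : ℕ => ((Real.log K)^2)⁻¹) atTop (𝓝 0) :=
    ((tendsto_pow_atTop two_ne_zero).comp hLT).inv_tendsto_atTop
  have t2 : Tendsto (fun K : ℕ => (1 - Real.exp (-1))^K) atTop (𝓝 0) := by
    apply tendsto_pow_atTop_nhds_zero_of_lt_one
    · have : Real.exp (-1) ≤ 1 := Real.exp_le_one_iff.mpr (by norm_num); linarith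
    · have : 0 < Real.exp (-1) := Real.exp_pos _; linarith
  have t3 : Tendsto (fun K : ℕ =>
      Real.log K / (Real.log K + 2 * Real.log (Real.log K))) atTop (𝓝 1) :=
    tendsto_ratio_add.comp hLT
  have := (((tendsto_const_nhds (x := (1:ℝ)) (f := atTop)).sub t1).sub t2).mul t3
  simp only [sub_zero, mul_one] at this
  exact this

lemma U_tendsto : Tendsto U atTop (𝓝 1) := by
  have u1 : Tendsto (fun K : ℕ =>
      Real.log K * ((1/2) * ((K:ℝ) * (1/2:ℝ)^(K-2)))) atTop (𝓝 0) := by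
    have base : Tendsto (fun K : ℕ => 2 * ((K:ℝ)^2 * (1/2:ℝ)^K)) atTop (𝓝 0) := by
      have := (tendsto_pow_const_mul_const_pow_of_lt_one 2
        (by norm_num : (0:ℝ) ≤ 1/2) (by norm_num)).const_mul (2:ℝ)
      simpa [mul_comm] using this
    apply tendsto_of_tendsto_of_tendsto_of_le_of_le' tendsto_const_nhds base ?_ ?_
    · filter_upwards [hLT.eventually_ge_atTop 0] with K hl0
      have : (0:ℝ) ≤ (K:ℝ) := Nat.cast_nonneg K
      positivity
    · filter_upwards [eventually_ge_atTop 2, hLT.eventually_ge_atTop 0] with K hK2 hl0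
      have hK0 : (0:ℝ) < K := by positivity
      have hlog_le : Real.log K ≤ (K:ℝ) := by
        have := Real.log_le_sub_one_of_pos hK0; linarith
      have hp : (1/2:ℝ)^(K-2) = 4 * (1/2:ℝ)^K := by
        have h : (K-2)+2 = K := by omega
        calc (1/2:ℝ)^(K-2) = (1/2:ℝ)^((K-2)+2) * 4 := by rw [pow_add]; norm_num; ring
          _ = 4 * (1/2:ℝ)^K := by rw [h]; ring
      rw [hp]
      have hpow : (0:ℝ) ≤ (1/2:ℝ)^K := by positivity
      nlinarith [mul_le_mul hlog_le (le_refl ((K:ℝ) * (1/2:ℝ)^K)) (by positivity) (by positivity)]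
  have u2 : Tendsto (fun K : ℕ =>
      Real.log K * (aa K * (2 * (K:ℝ) * Real.exp (-((Real.log K)^2/2))))) atTop (𝓝 0) := by
    have base : Tendsto (fun K : ℕ => 2 * ((Real.log K)^2 * Real.exp (-Real.log K)))
        atTop (𝓝 0) := by
      have := ((Real.tendsto_pow_mul_exp_neg_atTop_nhds_zero 2).comp hLT).const_mul (2:ℝ)
      simpa [mul_comm] using this
    apply tendsto_of_tendsto_of_tendsto_of_le_of_le' tendsto_const_nhds base ?_ ?_
    · filter_upwards [hLT.eventually_ge_atTop 0, haaT.eventually_ge_atTop 0] with K h1 h2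
      have : (0:ℝ) ≤ (K:ℝ) := Nat.cast_nonneg K
      have := (Real.exp_pos (-((Real.log K)^2/2))).le
      positivity
    · filter_upwards [eventually_ge_atTop 2, hLT.eventually_ge_atTop 4,
        haaT.eventually_ge_atTop 0] with K hK2 hl4 ha0
      have hK2' : (2:ℝ) ≤ (K:ℝ) := by exact_mod_cast hK2
      have hK0 : (0:ℝ) < K := by linarith
      have ha_le : aa K ≤ Real.log K := by
        have : 0 ≤ Real.log (Real.log K) := Real.log_nonneg (by linarith)
        unfold aa; linarith
      have hkey : (K:ℝ) * Real.exp (-((Real.log K)^2/2)) ≤ Real.exp (-Real.log K) := by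
        nth_rewrite 1 [show (K:ℝ) = Real.exp (Real.log K) from (Real.exp_log hK0).symm]
        rw [← Real.exp_add]
        apply Real.exp_le_exp.mpr
        nlinarith
      have e1 : (0:ℝ) ≤ Real.exp (-((Real.log K)^2/2)) := (Real.exp_pos _).le
      have e2 : (0:ℝ) ≤ Real.exp (-Real.log K) := (Real.exp_pos _).le
      have hl0 : (0:ℝ) ≤ Real.log K := by linarith
      nlinarith [mul_le_mul ha_le hkey (by positivity) hl0]
  have u3 : Tendsto (fun K : ℕ => Real.log K * (aa K)⁻¹) atTop (𝓝 1) := by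
    apply (tendsto_ratio_sub.comp hLT).congr
    intro K
    simp [aa, div_eq_mul_inv, Function.comp]
  have h := (u1.add u2).add u3
  rw [show (0:ℝ)+0+1 = 1 by norm_num] at h
  exact h


lemma upper_bound : ∀ᶠ K : ℕ in atTop,
    Real.log K * ∫ z in Ioi (0:ℝ), z⁻¹ * h K z ≤ U K := by
  filter_upwards [eventually_ge_atTop 2, hLT.eventually_ge_atTop 4,
    haaT.eventually_ge_atTop 1] with K hK2 hl4 ha1
  have hK2' : (2:ℝ) ≤ (K:ℝ) := by exact_mod_cast hK2
  have hK0 : (0:ℝ) < K := by linarith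
  have hl0 : (0:ℝ) < Real.log K := by linarith
  have ha0 : (0:ℝ) < aa K := by linarith
  have h12a : (1/2:ℝ) ≤ aa K := by linarith
  have fInt : IntegrableOn (fun z => z⁻¹ * h K z) (Ioi (0:ℝ)) := f_integrableOn hK2
  have int1 : IntegrableOn (fun z => z⁻¹ * h K z) (Ioc (0:ℝ) (1/2)) :=
    fInt.mono_set Ioc_subset_Ioi_self
  have int2 : IntegrableOn (fun z => z⁻¹ * h K z) (Ioc (1/2:ℝ) (aa K)) :=
    fInt.mono_set (fun z hz => lt_trans (by norm_num) hz.1)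
  have int3 : IntegrableOn (fun z => z⁻¹ * h K z) (Ioi (aa K)) :=
    fInt.mono_set (Ioi_subset_Ioi ha0.le)
  have int12 : IntegrableOn (fun z => z⁻¹ * h K z) (Ioc (0:ℝ) (aa K)) :=
    fInt.mono_set Ioc_subset_Ioi_self
  -- exp(-(aa K)) = (log K)^2 / K
  have hea : Real.exp (-(aa K)) = (Real.log K)^2 / K := by
    have h1 : -(aa K) = Real.log (Real.log K) + Real.log (Real.log K) + (-Real.log K) := by
      unfold aa; ring
    rw [h1, Real.exp_add, Real.exp_add, Real.exp_log hl0, Real.exp_neg, Real.exp_log hK0]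
    ring
  -- splitting
  have hsplit : (∫ z in Ioi (0:ℝ), z⁻¹ * h K z)
      = (∫ z in Ioc (0:ℝ) (1/2), z⁻¹ * h K z) + (∫ z in Ioc (1/2:ℝ) (aa K), z⁻¹ * h K z)
        + (∫ z in Ioi (aa K), z⁻¹ * h K z) := by
    have e1 : Ioc (0:ℝ) (1/2) ∪ Ioc (1/2:ℝ) (aa K) = Ioc 0 (aa K) :=
      Ioc_union_Ioc_eq_Ioc (by norm_num) h12a
    have e2 : Ioc (0:ℝ) (aa K) ∪ Ioi (aa K) = Ioi 0 := Ioc_union_Ioi_eq_Ioi ha0.le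
    rw [← e2, setIntegral_union Ioc_disjoint_Ioi_same measurableSet_Ioi int12 int3,
      ← e1, setIntegral_union (Ioc_disjoint_Ioc_of_le le_rfl) measurableSet_Ioc int1 int2]
  -- piece 1
  have hP1 : (∫ z in Ioc (0:ℝ) (1/2), z⁻¹ * h K z) ≤ (1/2) * ((K:ℝ) * (1/2:ℝ)^(K-2)) := by
    have hmono : (∫ z in Ioc (0:ℝ) (1/2), z⁻¹ * h K z)
        ≤ ∫ _z in Ioc (0:ℝ) (1/2), ((K:ℝ) * (1/2:ℝ)^(K-2)) := by
      apply setIntegral_mono_on int1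
        (integrableOn_const measure_Ioc_lt_top.ne) measurableSet_Ioc
      intro z hz
      have hz1 : 0 < z := hz.1
      have hz2 : z ≤ 1/2 := hz.2
      have hb := base_nonneg hz1.le
      have hp : (1 - Real.exp (-z))^(K-1) ≤ z^(K-1) :=
        pow_le_pow_left₀ hb (base_le_self z) _
      have h2 : z⁻¹ * h K z ≤ z⁻¹ * ((K:ℝ) * 1 * z^(K-1)) := by
        apply mul_le_mul_of_nonneg_left _ (inv_nonneg.2 hz1.le)
        unfold h
        apply mul_le_mul _ hp (pow_nonneg hb _) (by positivity)
        have : Real.exp (-z) ≤ 1 := Real.exp_le_one_iff.mpr (by linarith)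
        nlinarith
      have h3 : z⁻¹ * ((K:ℝ) * 1 * z^(K-1)) = (K:ℝ) * z^(K-2) := by
        rw [show K - 1 = (K-2)+1 from by omega, pow_succ]
        field_simp
      have h4 : z^(K-2) ≤ (1/2:ℝ)^(K-2) := pow_le_pow_left₀ hz1.le hz2 _
      have h5 : (K:ℝ) * z^(K-2) ≤ (K:ℝ) * (1/2:ℝ)^(K-2) :=
        mul_le_mul_of_nonneg_left h4 (by positivity)
      linarith [h3.le]
    have hconst : (∫ _z in Ioc (0:ℝ) (1/2), ((K:ℝ) * (1/2:ℝ)^(K-2)))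
        = (1/2) * ((K:ℝ) * (1/2:ℝ)^(K-2)) := by
      rw [setIntegral_const, Real.volume_real_Ioc, smul_eq_mul]
      norm_num
    linarith
  -- piece 2
  have hc2 : (0:ℝ) ≤ 2 * (K:ℝ) * Real.exp (-((Real.log K)^2/2)) := by positivity
  have hP2 : (∫ z in Ioc (1/2:ℝ) (aa K), z⁻¹ * h K z)
      ≤ aa K * (2 * (K:ℝ) * Real.exp (-((Real.log K)^2/2))) := by
    have hmono : (∫ z in Ioc (1/2:ℝ) (aa K), z⁻¹ * h K z)
        ≤ ∫ _z in Ioc (1/2:ℝ) (aa K), (2 * (K:ℝ) * Real.exp (-((Real.log K)^2/2))) := by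
      apply setIntegral_mono_on int2
        (integrableOn_const measure_Ioc_lt_top.ne) measurableSet_Ioc
      intro z hz
      have hz0 : (0:ℝ) < z := lt_trans (by norm_num) hz.1
      have hzinv : z⁻¹ ≤ 2 := by
        have := inv_anti₀ (by norm_num : (0:ℝ) < 1/2) hz.1.le
        norm_num at this
        linarith
      have hb := base_nonneg hz0.le
      have hKm1 : ((K-1 : ℕ) : ℝ) = (K:ℝ) - 1 := by
        have : 1 ≤ K := by omega
        push_cast [this]
        ring
      -- (1 - e^{-z})^{K-1} ≤ exp(-(log K)^2/2)
      have hpowle : (1 - Real.exp (-z))^(K-1) ≤ Real.exp (-((Real.log K)^2/2)) := by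
        have h1 : 1 - Real.exp (-z) ≤ Real.exp (-Real.exp (-z)) := by
          have := Real.add_one_le_exp (-Real.exp (-z)); linarith
        have h2 : (1 - Real.exp (-z))^(K-1) ≤ Real.exp (-Real.exp (-z))^(K-1) :=
          pow_le_pow_left₀ hb h1 _
        have h3 : Real.exp (-Real.exp (-z))^(K-1)
            = Real.exp (((K-1:ℕ):ℝ) * (-Real.exp (-z))) := by
          rw [← Real.exp_nat_mul]
        have h6 : (Real.log K)^2 / K ≤ Real.exp (-z) := by
          rw [← hea]
          exact Real.exp_le_exp.mpr (by linarith [hz.2])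
        have hfrac : (Real.log K)^2/2 ≤ ((K:ℝ)-1) * ((Real.log K)^2/K) := by
          have hsq := sq_nonneg (Real.log K)
          have heq : ((K:ℝ)-1) * ((Real.log K)^2/K) - (Real.log K)^2/2
              = (Real.log K)^2 * (((K:ℝ)-2)/(2*K)) := by
            field_simp
            ring
          have hnn : 0 ≤ (Real.log K)^2 * (((K:ℝ)-2)/(2*K)) :=
            mul_nonneg hsq (div_nonneg (by linarith) (by linarith))
          linarith
        have h7 : (Real.log K)^2/2 ≤ ((K:ℝ)-1) * Real.exp (-z) := by
          have := mul_le_mul_of_nonneg_left h6 (by linarith : (0:ℝ) ≤ (K:ℝ)-1)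
          calc (Real.log K)^2/2 ≤ ((K:ℝ)-1) * ((Real.log K)^2/K) := hfrac
            _ ≤ ((K:ℝ)-1) * Real.exp (-z) := this
        calc (1 - Real.exp (-z))^(K-1) ≤ Real.exp (-Real.exp (-z))^(K-1) := h2
          _ = Real.exp (((K-1:ℕ):ℝ) * (-Real.exp (-z))) := h3
          _ ≤ Real.exp (-((Real.log K)^2/2)) := by
              apply Real.exp_le_exp.mpr
              rw [hKm1]
              nlinarith
      have hhle : h K z ≤ (K:ℝ) * Real.exp (-((Real.log K)^2/2)) := by
        unfold h
        have hexpz : Real.exp (-z) ≤ 1 := Real.exp_le_one_iff.mpr (by linarith)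
        apply mul_le_mul _ hpowle (pow_nonneg hb _) (by positivity)
        nlinarith
      have hhnn : 0 ≤ h K z := h_nonneg hz0.le
      have hfin := mul_le_mul hzinv hhle hhnn (by norm_num : (0:ℝ) ≤ 2)
      linarith [hfin]
    have hconst : (∫ _z in Ioc (1/2:ℝ) (aa K), (2 * (K:ℝ) * Real.exp (-((Real.log K)^2/2))))
        = (aa K - 1/2) * (2 * (K:ℝ) * Real.exp (-((Real.log K)^2/2))) := by
      rw [setIntegral_const, Real.volume_real_Ioc, smul_eq_mul,
        max_eq_left (by linarith)]
    have : (aa K - 1/2) * (2 * (K:ℝ) * Real.exp (-((Real.log K)^2/2)))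
        ≤ aa K * (2 * (K:ℝ) * Real.exp (-((Real.log K)^2/2))) := by
      apply mul_le_mul_of_nonneg_right (by linarith) hc2
    linarith
  -- piece 3
  have hP3 : (∫ z in Ioi (aa K), z⁻¹ * h K z) ≤ (aa K)⁻¹ := by
    have hmono : (∫ z in Ioi (aa K), z⁻¹ * h K z)
        ≤ ∫ z in Ioi (aa K), (aa K)⁻¹ * h K z := by
      apply setIntegral_mono_on int3
        ((h_integrableOn ha0.le).const_mul _) measurableSet_Ioi
      intro z hz
      have hz0 : (0:ℝ) < z := lt_trans ha0 hz
      exact mul_le_mul_of_nonneg_right (inv_anti₀ ha0 (le_of_lt hz))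
        (h_nonneg hz0.le)
    have heq : (∫ z in Ioi (aa K), (aa K)⁻¹ * h K z)
        = (aa K)⁻¹ * (1 - (1 - Real.exp (-(aa K)))^K) := by
      rw [integral_const_mul, integral_h_Ioi (by omega) ha0.le]
    have hbp : 0 ≤ (1 - Real.exp (-(aa K)))^K := pow_nonneg (base_nonneg ha0.le) _
    have : (aa K)⁻¹ * (1 - (1 - Real.exp (-(aa K)))^K) ≤ (aa K)⁻¹ * 1 :=
      mul_le_mul_of_nonneg_left (by linarith) (inv_nonneg.2 ha0.le)
    rw [heq] at hmono
    linarith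
  calc Real.log K * ∫ z in Ioi (0:ℝ), z⁻¹ * h K z
      ≤ Real.log K * ((1/2) * ((K:ℝ) * (1/2:ℝ)^(K-2))
          + aa K * (2 * (K:ℝ) * Real.exp (-((Real.log K)^2/2))) + (aa K)⁻¹) := by
        rw [hsplit]
        apply mul_le_mul_of_nonneg_left (by linarith) hl0.le
    _ = U K := by unfold U; ring


lemma lower_bound : ∀ᶠ K : ℕ in atTop,
    Lo K ≤ Real.log K * ∫ z in Ioi (0:ℝ), z⁻¹ * h K z := by
  filter_upwards [eventually_ge_atTop 2, hLT.eventually_ge_atTop 4] with K hK2 hl4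
  have hK2' : (2:ℝ) ≤ (K:ℝ) := by exact_mod_cast hK2
  have hK0 : (0:ℝ) < K := by linarith
  have hl0 : (0:ℝ) < Real.log K := by linarith
  have hlogl0 : (0:ℝ) ≤ Real.log (Real.log K) := Real.log_nonneg (by linarith)
  set B : ℝ := Real.log K + 2 * Real.log (Real.log K) with hB_def
  have hB4 : (4:ℝ) ≤ B := by rw [hB_def]; linarith
  have hB0 : (0:ℝ) < B := by linarith
  have h1B : (1:ℝ) ≤ B := by linarith
  have fInt : IntegrableOn (fun z => z⁻¹ * h K z) (Ioi (0:ℝ)) := f_integrableOn hK2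
  -- exp(-B) = K⁻¹ * (log K)⁻²
  have heB : Real.exp (-B) = (K:ℝ)⁻¹ * ((Real.log K)^2)⁻¹ := by
    have h1 : -B = (-Real.log K) + (-(Real.log (Real.log K) + Real.log (Real.log K))) := by
      rw [hB_def]; ring
    rw [h1, Real.exp_add, Real.exp_neg, Real.exp_neg, Real.exp_add, Real.exp_log hK0,
      Real.exp_log hl0, ← sq]
  have hKeB : (K:ℝ) * Real.exp (-B) = ((Real.log K)^2)⁻¹ := by
    rw [heB, ← mul_assoc, mul_inv_cancel₀ (ne_of_gt hK0), one_mul]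
  -- step 1 : constant lower bound on Ioc 1 B
  have s1 : (∫ z in Ioc (1:ℝ) B, B⁻¹ * h K z) ≤ ∫ z in Ioc (1:ℝ) B, z⁻¹ * h K z := by
    apply setIntegral_mono_on
      (((h_integrableOn zero_le_one).mono_set Ioc_subset_Ioi_self).const_mul _)
      (fInt.mono_set (fun z hz => lt_trans one_pos hz.1)) measurableSet_Ioc
    intro z hz
    have hz0 : (0:ℝ) < z := lt_trans one_pos hz.1
    exact mul_le_mul_of_nonneg_right (inv_anti₀ hz0 hz.2) (h_nonneg hz0.le)
  -- step 2 : extend to Ioi 0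
  have s2 : (∫ z in Ioc (1:ℝ) B, z⁻¹ * h K z) ≤ ∫ z in Ioi (0:ℝ), z⁻¹ * h K z := by
    apply setIntegral_mono_set fInt
    · filter_upwards [ae_restrict_mem measurableSet_Ioi] with z hz
      exact mul_nonneg (inv_nonneg.2 (le_of_lt hz)) (h_nonneg (le_of_lt hz))
    · exact HasSubset.Subset.eventuallyLE (fun z hz => lt_trans one_pos hz.1)
  -- step 3 : FTC value
  have s3 : (∫ z in Ioc (1:ℝ) B, B⁻¹ * h K z)
      = B⁻¹ * ((1 - Real.exp (-B))^K - (1 - Real.exp (-1))^K) := by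
    rw [integral_const_mul, integral_h_Ioc h1B]
  -- step 4 : Bernoulli
  have s4 : 1 - ((Real.log K)^2)⁻¹ ≤ (1 - Real.exp (-B))^K := by
    have hexp1 : Real.exp (-B) ≤ 1 := Real.exp_le_one_iff.mpr (by linarith)
    have hber := one_add_mul_le_pow
      (show (-2:ℝ) ≤ -Real.exp (-B) by linarith) K
    calc 1 - ((Real.log K)^2)⁻¹ = 1 + (K:ℝ) * (-Real.exp (-B)) := by
          rw [← hKeB]; ring
      _ ≤ (1 + -Real.exp (-B))^K := hber
      _ = (1 - Real.exp (-B))^K := by ring_nf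
  -- combine
  have key1 : 1 - ((Real.log K)^2)⁻¹ - (1 - Real.exp (-1))^K
      ≤ (1 - Real.exp (-B))^K - (1 - Real.exp (-1))^K := by linarith
  have hlB : (0:ℝ) ≤ Real.log K / B := div_nonneg hl0.le hB0.le
  calc Lo K = (1 - ((Real.log K)^2)⁻¹ - (1 - Real.exp (-1))^K) * (Real.log K / B) := by
        rw [Lo, hB_def]
    _ ≤ ((1 - Real.exp (-B))^K - (1 - Real.exp (-1))^K) * (Real.log K / B) :=
        mul_le_mul_of_nonneg_right key1 hlB
    _ = Real.log K * (B⁻¹ * ((1 - Real.exp (-B))^K - (1 - Real.exp (-1))^K)) := by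
        ring
    _ = Real.log K * (∫ z in Ioc (1:ℝ) B, B⁻¹ * h K z) := by rw [s3]
    _ ≤ Real.log K * (∫ z in Ioc (1:ℝ) B, z⁻¹ * h K z) :=
        mul_le_mul_of_nonneg_left s1 hl0.le
    _ ≤ Real.log K * ∫ z in Ioi (0:ℝ), z⁻¹ * h K z :=
        mul_le_mul_of_nonneg_left s2 hl0.le

end MaxExpInvAux

end AuxMaxExpInv

/-- **Inverse moment of the maximum of `K` i.i.d. exponentials.** For integer `K ≥ 2`, let
`Z_K` have the density `f_K(z) = K·e^{−z}·(1 − e^{−z})^{K−1}` on `(0,∞)` (the maximum of `K`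
i.i.d. unit-mean exponential random variables). Then `(log K)·E[Z_K⁻¹] → 1` as `K → ∞`. -/
theorem log_mul_inverse_moment_max_exponentials_tendsto_one :
    Tendsto (fun K : ℕ =>
        Real.log K * ∫ z in Set.Ioi (0:ℝ),
          z⁻¹ * ((K : ℝ) * Real.exp (-z) * (1 - Real.exp (-z)) ^ (K - 1)))
      atTop (𝓝 1) :=
  tendsto_of_tendsto_of_tendsto_of_le_of_le' MaxExpInvAux.Lo_tendsto MaxExpInvAux.U_tendsto
    MaxExpInvAux.lower_bound MaxExpInvAux.upper_bound
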